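/- Define B : ℕ → ℚ by B(-1)=0, B(0)=1, B(n)=B(n-1)+(1/n)B(n-2) for n≥1. Define k(n)=B(n-2)/n - B(n-3)/(n-1) for n≥2. Then k(n) = (-1)^n / n! for all n≥2. -/

import Mathlib

theorem stmt2 (B k : ℤ → ℚ)
    (hB1 : B (-1) = 0) (hB0 : B 0 = 1)
    (hBrec : ∀ n : ℤ, 1 ≤ n → B n = B (n - 1) + (1 / (n : ℚ)) * B (n - 2))
    (hk : ∀ n : ℤ, 2 ≤ n → k n = B (n - 2) / (n : ℚ) - B (n - 3) / ((n : ℚ) - 1)) :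
    ∀ n : ℤ, 2 ≤ n → k n = (-1 : ℚ) ^ n / (n.toNat.factorial : ℚ) := by
  intro n hn
  refine Int.le_induction (motive := fun n _ => k n = (-1 : ℚ) ^ n / (n.toNat.factorial : ℚ)) ?_ ?_ n hn
  · show k 2 = (-1 : ℚ) ^ (2:ℤ) / (((2:ℤ).toNat.factorial : ℚ))
    have h := hk 2 (by norm_num)
    norm_num at h
    rw [h, hB0, hB1]
    norm_num [Nat.factorial]
    rw [show Int.toNat 2 = 2 from rfl]; norm_num [Nat.factorial]
  · intro n hn ih
    have hnQ : (2:ℚ) ≤ (n:ℚ) := by exact_mod_cast hn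
    have h0 : (n:ℚ) ≠ 0 := by linarith
    have h1 : (n:ℚ) - 1 ≠ 0 := by intro h; linarith
    have h2 : (n:ℚ) + 1 ≠ 0 := by intro h; linarith
    have hk1 := hk (n+1) (by linarith)
    have hkn := hk n hn
    have hB := hBrec (n-1) (by linarith)
    have e1 : n + 1 - 2 = n - 1 := by ring
    have e2 : n + 1 - 3 = n - 2 := by ring
    have e3 : n - 1 - 1 = n - 2 := by ring
    have e4 : n - 1 - 2 = n - 3 := by ring
    rw [e1, e2] at hk1
    rw [e3, e4] at hB
    have key : k (n+1) = -k n / ((n:ℚ)+1) := by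
      rw [hk1, hkn, hB]
      push_cast
      field_simp
      ring_nf
      field_simp
      ring
    rw [key, ih]
    have ht : (n+1).toNat = n.toNat + 1 := by omega
    rw [ht, Nat.factorial_succ]
    have hcast : ((n.toNat : ℚ)) = (n:ℚ) := by
      exact_mod_cast Int.toNat_of_nonneg (by linarith)
    have hfact : (n.toNat.factorial : ℚ) ≠ 0 := by positivity
    rw [zpow_add_one₀ (by norm_num : (-1:ℚ) ≠ 0)]
    push_cast [hcast]
    field_simp
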